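/- If the negativity of the OQ is strictly positive, N[q^OQ(ρ)] > 0, then there exist indices i, f with [ρ, A_i] ≠ 0, and there exist indices i, f with [A_i, B_f] ≠ 0. -/

import Mathlib

open Matrix ComplexOrder

private lemma psd_trace_nonneg {n : Type*} [Fintype n] [DecidableEq n]
    {M : Matrix n n ℂ} (h : M.PosSemidef) : 0 ≤ M.trace := by
  rw [Matrix.trace]
  apply Finset.sum_nonneg
  intro i _
  have := h.dotProduct_mulVec_nonneg (Pi.single i 1)
  simpa [Matrix.diag, Matrix.mulVec_single, dotProduct, Pi.single_apply,
    apply_ite] using this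

open scoped MatrixOrder in
private lemma trace_mul_psd_nonneg {n : Type*} [Fintype n] [DecidableEq n]
    {X Y : Matrix n n ℂ} (hX : X.PosSemidef) (hY : Y.PosSemidef) :
    0 ≤ (X * Y).trace := by
  have hs : CFC.sqrt X * CFC.sqrt X = X := CFC.sqrt_mul_sqrt_self X hX.nonneg
  have key : (CFC.sqrt X * Y * (CFC.sqrt X)ᴴ).trace = (X * Y).trace := by
    rw [(CFC.sqrt_nonneg X).posSemidef.isHermitian.eq, Matrix.trace_mul_comm, ← mul_assoc, hs]
  rw [← key]
  exact psd_trace_nonneg (hY.mul_mul_conjTranspose_same (CFC.sqrt X))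

/-- Strictly positive negativity of the OQ witnesses
noncommutativity: some `A_i` fails to commute with `ρ`, and some pair
`A_i, B_f` fails to commute. -/
theorem oq_negativity_witnesses_noncommutativity (d : ℕ) (hd : 0 < d)
    (ρ : Matrix (Fin d) (Fin d) ℂ) (hρ : ρ.PosSemidef) (hρtr : ρ.trace = 1)
    (A : Fin d → Matrix (Fin d) (Fin d) ℂ)
    (hAherm : ∀ i, (A i).IsHermitian) (hAproj : ∀ i, A i * A i = A i)
    (hAsum : ∑ i, A i = 1)
    (B : Fin d → Matrix (Fin d) (Fin d) ℂ)
    (hBpos : ∀ f, (B f).PosSemidef) (hBsum : ∑ f, B f = 1)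
    (q : Fin d → Fin d → ℝ)
    (hq : ∀ i f, (q i f : ℂ) = (A i * ρ * A i * B f).trace +
      (1 / (d : ℂ)) * ((ρ * B f).trace - ∑ i', (A i' * ρ * A i' * B f).trace))
    (hneg : 0 < (∑ i, ∑ f, |q i f|) - 1) :
    (∃ i, ρ * A i ≠ A i * ρ) ∧ (∃ i f, A i * B f ≠ B f * A i) := by
  have hd' : (d : ℂ) ≠ 0 := Nat.cast_ne_zero.mpr hd.ne'
  have hTf : ∀ M : Matrix (Fin d) (Fin d) ℂ, ∑ f, (M * B f).trace = M.trace := by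
    intro M
    rw [← Matrix.trace_sum, ← Finset.mul_sum, hBsum, mul_one]
  have hinner : ∀ i, ∑ f, (q i f : ℂ) =
      (A i * ρ * A i).trace + (1 / (d : ℂ)) *
        (1 - ∑ i', (A i' * ρ * A i').trace) := by
    intro i
    simp only [hq]
    have h1 : ∑ f, ∑ i', (A i' * ρ * A i' * B f).trace
        = ∑ i', (A i' * ρ * A i').trace := by
      rw [Finset.sum_comm]
      exact Finset.sum_congr rfl fun i' _ => hTf _
    rw [Finset.sum_add_distrib, ← Finset.mul_sum, Finset.sum_sub_distrib, h1,
      hTf, hTf, hρtr]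
  have hsum1 : ((∑ i, ∑ f, q i f : ℝ) : ℂ) = 1 := by
    push_cast
    rw [Finset.sum_congr rfl fun i _ => hinner i]
    set S := ∑ i', (A i' * ρ * A i').trace with hS
    rw [Finset.sum_add_distrib, Finset.sum_const, Finset.card_univ,
      Fintype.card_fin, ← hS, nsmul_eq_mul]
    have h2 : (d : ℂ) * ((1 / (d : ℂ)) * (1 - S)) = 1 - S := by field_simp
    rw [h2]
    ring
  have hsumq : ∑ i, ∑ f, q i f = 1 := by exact_mod_cast hsum1
  have hqneg : ∃ i f, q i f < 0 := by
    by_contra h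
    push_neg at h
    have : ∑ i, ∑ f, |q i f| = ∑ i, ∑ f, q i f := by
      refine Finset.sum_congr rfl fun i _ => Finset.sum_congr rfl fun f _ => ?_
      exact abs_of_nonneg (h i f)
    rw [this, hsumq] at hneg
    linarith
  obtain ⟨i₀, f₀, hq0⟩ := hqneg
  have key : ∀ i f, (A i * ρ * A i * B f).trace = (ρ * (A i * B f * A i)).trace := by
    intro i f
    calc (A i * ρ * A i * B f).trace
        = ((A i * ρ) * (A i * B f)).trace := by rw [mul_assoc (A i * ρ)]
      _ = ((A i * B f) * (A i * ρ)).trace := Matrix.trace_mul_comm _ _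
      _ = ((A i * B f * A i) * ρ).trace := by rw [← mul_assoc]
      _ = (ρ * (A i * B f * A i)).trace := Matrix.trace_mul_comm _ _
  constructor
  · by_contra h
    push_neg at h
    have hAA : ∀ i, A i * ρ * A i = ρ * A i := by
      intro i
      rw [← h i, mul_assoc, hAproj i]
    have hcorr : ∑ i', (A i' * ρ * A i' * B f₀).trace = (ρ * B f₀).trace := by
      have he : ∀ i', A i' * ρ * A i' * B f₀ = ρ * (A i' * B f₀) := by
        intro i'; rw [hAA i', mul_assoc]
      rw [Finset.sum_congr rfl fun i' _ => congrArg Matrix.trace (he i')]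
      rw [← Matrix.trace_sum, ← Finset.mul_sum, ← Finset.sum_mul, hAsum, one_mul]
    have hqval : (q i₀ f₀ : ℂ) = (A i₀ * ρ * A i₀ * B f₀).trace := by
      rw [hq, hcorr, sub_self, mul_zero, add_zero]
    have hpsd : (A i₀ * ρ * A i₀).PosSemidef := by
      have := hρ.mul_mul_conjTranspose_same (A i₀)
      rwa [(hAherm i₀).eq] at this
    have hnn : 0 ≤ (q i₀ f₀ : ℂ) := by
      rw [hqval]
      exact trace_mul_psd_nonneg hpsd (hBpos f₀)
    rw [Complex.zero_le_real] at hnn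
    linarith
  · by_contra h
    push_neg at h
    have hABA : ∀ i f, A i * B f * A i = A i * B f := by
      intro i f
      rw [mul_assoc, ← h i f, ← mul_assoc, hAproj i]
    have hcorr : ∑ i', (A i' * ρ * A i' * B f₀).trace = (ρ * B f₀).trace := by
      have he : ∀ i', (A i' * ρ * A i' * B f₀).trace = (ρ * (A i' * B f₀)).trace := by
        intro i'; rw [key i' f₀, hABA i' f₀]
      rw [Finset.sum_congr rfl fun i' _ => he i']
      rw [← Matrix.trace_sum, ← Finset.mul_sum, ← Finset.sum_mul, hAsum, one_mul]
    have hqval : (q i₀ f₀ : ℂ) = (ρ * (A i₀ * B f₀ * A i₀)).trace := by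
      rw [hq, hcorr, sub_self, mul_zero, add_zero, key]
    have hpsd : (A i₀ * B f₀ * A i₀).PosSemidef := by
      have := (hBpos f₀).mul_mul_conjTranspose_same (A i₀)
      rwa [(hAherm i₀).eq] at this
    have hnn : 0 ≤ (q i₀ f₀ : ℂ) := by
      rw [hqval]
      exact trace_mul_psd_nonneg hρ hpsd
    rw [Complex.zero_le_real] at hnn
    linarith
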